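/- Let γ∈(0,1], ψ(x) = exp(−|x|^γ)/χ with χ = ∫_ℝ exp(−|x|^γ)dx, ψ^σ(x) = ψ(x/σ)/σ for σ>0, and q_σ := q ∗ ψ^σ for a probability density q on ℝ. Then for all a,b,z∈ℝ, q_σ(z−a) ≤ exp( |a−b|^γ / σ^γ ) · q_σ(z−b). In particular, ‖log( T_a q_σ / T_b q_σ )‖_{L^∞(ℝ)} ≤ (|a−b|/σ)^γ for all a,b∈ℝ. -/

import Mathlib

open MeasureTheory Filter Real Set
open scoped ENNReal NNReal Classical

noncomputable section

/-- Shift operator on Borel measures: `(shiftMeasure a μ) B = μ (B - a)`. -/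
def shiftMeasure (a : ℝ) (μ : Measure ℝ) : Measure ℝ := μ.map (· + a)

/-- Kullback–Leibler divergence between Borel measures on `ℝ`. -/
def KLdiv (μ ν : Measure ℝ) : ℝ≥0∞ :=
  if μ ≪ ν ∧ Integrable (llr μ ν) μ then ENNReal.ofReal (∫ x, llr μ ν x ∂μ) else ⊤

/-- Standing assumptions on the cost function. -/
structure IsCostFun (c : ℝ → ℝ) (α β : ℝ) : Prop where
  nonneg : ∀ x, 0 ≤ c x
  zero : c 0 = 0
  even : ∀ x, c (-x) = c x
  mono : ∀ x y : ℝ, |x| ≤ |y| → c x ≤ c y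
  continuous : Continuous c
  tail : Tendsto (fun x : ℝ => c x / (β * x ^ α)) atTop (nhds 1)


/-- Normalization constant `χ = ∫ exp(-|x|^γ) dx`. -/
def chiC (γ : ℝ) : ℝ := ∫ x : ℝ, Real.exp (-|x| ^ γ)

/-- The density `ψ(x) = exp(-|x|^γ) / χ`. -/
def psi (γ : ℝ) (x : ℝ) : ℝ := Real.exp (-|x| ^ γ) / chiC γ

/-- The dilated density `ψ^σ(x) = ψ(x/σ)/σ`. -/
def psiS (γ σ : ℝ) (x : ℝ) : ℝ := psi γ (x / σ) / σ

/-- The smoothed density `q_σ = q ∗ ψ^σ`. -/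
def smoothed (γ σ : ℝ) (q : ℝ → ℝ) (x : ℝ) : ℝ := ∫ y, q y * psiS γ σ (x - y)

lemma abs_rpow_subadd {γ : ℝ} (hγ : γ ∈ Set.Ioc (0 : ℝ) 1) (u v : ℝ) :
    |u + v| ^ γ ≤ |u| ^ γ + |v| ^ γ := by
  have h1 : |u + v| ^ γ ≤ (|u| + |v|) ^ γ :=
    Real.rpow_le_rpow (abs_nonneg _) (abs_add_le _ _) hγ.1.le
  refine h1.trans ?_
  have h := NNReal.rpow_add_le_add_rpow (Real.toNNReal |u|) (Real.toNNReal |v|) hγ.1.le hγ.2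
  have := NNReal.coe_le_coe.mpr h
  simpa [NNReal.coe_rpow, Real.coe_toNNReal _ (abs_nonneg u), Real.coe_toNNReal _ (abs_nonneg v),
    Real.toNNReal_add_toNNReal (abs_nonneg u) (abs_nonneg v)] using this

lemma chiC_nonneg (γ : ℝ) : 0 ≤ chiC γ :=
  integral_nonneg fun x => (Real.exp_pos _).le

lemma psi_nonneg (γ x : ℝ) : 0 ≤ psi γ x :=
  div_nonneg (Real.exp_pos _).le (chiC_nonneg γ)

lemma psi_shift {γ : ℝ} (hγ : γ ∈ Set.Ioc (0 : ℝ) 1) (u d : ℝ) :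
    psi γ (u + d) ≤ Real.exp (|d| ^ γ) * psi γ u := by
  unfold psi
  rcases eq_or_lt_of_le (chiC_nonneg γ) with h | h
  · simp [← h]
  rw [mul_div_assoc']
  have h' := h
  gcongr
  rw [← Real.exp_add]
  refine Real.exp_le_exp.mpr ?_
  have := abs_rpow_subadd hγ (u + d) (-d)
  simp only [add_neg_cancel_right, abs_neg] at this
  linarith

lemma psiS_nonneg {γ σ : ℝ} (hσ : 0 < σ) (x : ℝ) : 0 ≤ psiS γ σ x :=
  div_nonneg (psi_nonneg _ _) hσ.le

lemma psiS_shift {γ : ℝ} (hγ : γ ∈ Set.Ioc (0 : ℝ) 1) {σ : ℝ} (hσ : 0 < σ) (u d : ℝ) :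
    psiS γ σ (u + d) ≤ Real.exp (|d| ^ γ / σ ^ γ) * psiS γ σ u := by
  unfold psiS
  have hd : |d| ^ γ / σ ^ γ = |d / σ| ^ γ := by
    rw [abs_div, abs_of_pos hσ, Real.div_rpow (abs_nonneg _) hσ.le]
  rw [hd, ← mul_div_assoc]
  have h2 := psi_shift hγ (u / σ) (d / σ)
  rw [← add_div] at h2
  gcongr

lemma psiS_le {γ σ : ℝ} (hσ : 0 < σ) (x : ℝ) : psiS γ σ x ≤ 1 / (chiC γ * σ) := by
  unfold psiS psi
  rcases eq_or_lt_of_le (chiC_nonneg γ) with h | h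
  · simp [← h]
  rw [div_div]
  have hcs : (0:ℝ) < chiC γ * σ := by positivity
  gcongr
  rw [Real.exp_le_one_iff]
  exact neg_nonpos.mpr (Real.rpow_nonneg (abs_nonneg _) _)

lemma psiS_measurable (γ σ : ℝ) : Measurable (psiS γ σ) := by
  unfold psiS psi
  exact (((measurable_abs.comp (measurable_id.div_const σ)).pow_const γ).neg.exp.div_const
    _).div_const _

/-- Pointwise ratio bound for smoothed densities: `q_σ(z-a) ≤ exp(|a-b|^γ/σ^γ) q_σ(z-b)`,
hence `‖log(T_a q_σ / T_b q_σ)‖_∞ ≤ (|a-b|/σ)^γ`. -/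
theorem smoothed_shift_ratio_bound (γ : ℝ) (hγ : γ ∈ Set.Ioc (0 : ℝ) 1)
    (σ : ℝ) (hσ : 0 < σ)
    (q : ℝ → ℝ) (hqm : Measurable q) (hq0 : ∀ x, 0 ≤ q x) (hq1 : ∫ x, q x = 1) :
    (∀ a b z : ℝ,
      smoothed γ σ q (z - a) ≤ Real.exp (|a - b| ^ γ / σ ^ γ) * smoothed γ σ q (z - b)) ∧
    (∀ a b x : ℝ,
      |Real.log (smoothed γ σ q (x - a) / smoothed γ σ q (x - b))| ≤ (|a - b| / σ) ^ γ) := by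
  have hq_int : Integrable q := by
    by_contra h
    rw [integral_undef h] at hq1
    norm_num at hq1
  have hint : ∀ x : ℝ, Integrable (fun y => q y * psiS γ σ (x - y)) := by
    intro x
    have : Integrable (fun y => psiS γ σ (x - y) * q y) := by
      refine hq_int.bdd_mul (c := 1 / (chiC γ * σ)) ?_ (Eventually.of_forall fun y => ?_)
      · exact ((psiS_measurable γ σ).comp (measurable_const.sub measurable_id)).aestronglyMeasurable
      · rw [Real.norm_eq_abs, abs_of_nonneg (psiS_nonneg hσ _)]
        exact psiS_le hσ _
    simpa [mul_comm] using this
  have h0 : ∀ x : ℝ, 0 ≤ smoothed γ σ q x := fun x =>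
    integral_nonneg fun y => mul_nonneg (hq0 y) (psiS_nonneg hσ _)
  have part1 : ∀ a b z : ℝ,
      smoothed γ σ q (z - a) ≤ Real.exp (|a - b| ^ γ / σ ^ γ) * smoothed γ σ q (z - b) := by
    intro a b z
    unfold smoothed
    rw [← integral_const_mul]
    refine integral_mono_of_nonneg (Eventually.of_forall fun y =>
      mul_nonneg (hq0 y) (psiS_nonneg hσ _)) ((hint (z - b)).const_mul _)
      (Eventually.of_forall fun y => ?_)
    have hshift := psiS_shift hγ hσ (z - b - y) (b - a)
    have he : z - b - y + (b - a) = z - a - y := by ring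
    rw [he, abs_sub_comm b a] at hshift
    calc q y * psiS γ σ (z - a - y)
        ≤ q y * (Real.exp (|a - b| ^ γ / σ ^ γ) * psiS γ σ (z - b - y)) :=
          mul_le_mul_of_nonneg_left hshift (hq0 y)
      _ = Real.exp (|a - b| ^ γ / σ ^ γ) * (q y * psiS γ σ (z - b - y)) := by ring
  refine ⟨part1, fun a b x => ?_⟩
  have hcd : |a - b| ^ γ / σ ^ γ = (|a - b| / σ) ^ γ :=
    (Real.div_rpow (abs_nonneg _) hσ.le γ).symm
  set c : ℝ := (|a - b| / σ) ^ γ with hc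
  have hc0 : 0 ≤ c := Real.rpow_nonneg (by positivity) _
  have h1 : smoothed γ σ q (x - a) ≤ Real.exp c * smoothed γ σ q (x - b) := by
    rw [← hcd]; exact part1 a b x
  have h2 : smoothed γ σ q (x - b) ≤ Real.exp c * smoothed γ σ q (x - a) := by
    have := part1 b a x
    rwa [abs_sub_comm b a, hcd] at this
  set s := smoothed γ σ q (x - a)
  set t := smoothed γ σ q (x - b)
  rcases (h0 (x - b)).eq_or_lt with ht | ht
  · have ht' : t = 0 := ht.symm
    rw [ht', mul_zero] at h1
    have hs : s = 0 := le_antisymm h1 (h0 (x - a))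
    simp [hs, hc0]
  · have hs : 0 < s := by
      by_contra hs
      push_neg at hs
      nlinarith [Real.exp_pos c]
    have hl1 : Real.log s ≤ c + Real.log t := by
      have := Real.log_le_log hs h1
      rwa [Real.log_mul (Real.exp_ne_zero _) ht.ne', Real.log_exp] at this
    have hl2 : Real.log t ≤ c + Real.log s := by
      have := Real.log_le_log ht h2
      rwa [Real.log_mul (Real.exp_ne_zero _) hs.ne', Real.log_exp] at this
    rw [Real.log_div hs.ne' ht.ne', abs_le]
    constructor <;> linarith


end
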